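/- arXiv:1501.06120 — 8 statements merged into one kernel-verified Lean document; each statement's English description precedes it below -/
import Mathlib

section
/- Let F : 𝒳 × 𝒴 → 𝒵 be a bilinear map, Ω_X ⊆ 𝒳, Ω_Y ⊆ 𝒴, and let 𝒯 be a transformation group associated with F on Ω_X × Ω_Y. Then a pair (x0, y0) ∈ Ω_X × Ω_Y with x0 ≠ 0 and y0 ≠ 0 is identifiable up to 𝒯 if and only if the following two conditions hold: (1) for every (x, y) ∈ Ω_X × Ω_Y with F(x, y) = F(x0, y0), one has x ∈ [x0]^L; and (2) for every y ∈ Ω_Y with F(x0, y) = F(x0, y0), the pair (x0, y) lies in the orbit of (x0, y0) under 𝒯. -/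
/-- A pair (x0,y0) is identifiable up to a transformation group 𝒯
associated with a bilinear map F if and only if conditions (1) and (2) hold. -/
theorem stmt_1
    {X Y Z : Type*} [AddCommGroup X] [Module ℂ X] [AddCommGroup Y] [Module ℂ Y]
    [AddCommGroup Z] [Module ℂ Z]
    (F : X →ₗ[ℂ] Y →ₗ[ℂ] Z) (ΩX : Set X) (ΩY : Set Y)
    (𝒯 : Set ((ΩX → ΩX) × (ΩY → ΩY)))
    -- 𝒯 is closed under componentwise composition
    (hcomp : ∀ T1 ∈ 𝒯, ∀ T2 ∈ 𝒯, ((T2.1 ∘ T1.1, T2.2 ∘ T1.2) : (ΩX → ΩX) × (ΩY → ΩY)) ∈ 𝒯)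
    -- 𝒯 contains the identity pair
    (hid : ((id : ΩX → ΩX), (id : ΩY → ΩY)) ∈ 𝒯)
    -- every element of 𝒯 has a componentwise inverse in 𝒯
    (hinv : ∀ T ∈ 𝒯, ∃ T' ∈ 𝒯, T'.1 ∘ T.1 = id ∧ T.1 ∘ T'.1 = id ∧
      T'.2 ∘ T.2 = id ∧ T.2 ∘ T'.2 = id)
    -- F is invariant under every transformation in 𝒯
    (hF : ∀ T ∈ 𝒯, ∀ (x : ΩX) (y : ΩY), F ↑(T.1 x) ↑(T.2 y) = F ↑x ↑y)
    (x0 : ΩX) (y0 : ΩY) (hx0 : (x0 : X) ≠ 0) (hy0 : (y0 : Y) ≠ 0) :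
    -- (x0, y0) is identifiable up to 𝒯
    (∀ (x : ΩX) (y : ΩY), F ↑x ↑y = F ↑x0 ↑y0 →
        ∃ T ∈ 𝒯, T.1 x0 = x ∧ T.2 y0 = y)
    ↔
    -- Condition (1): any solution x lies in the left equivalence class of x0
    ((∀ (x : ΩX) (y : ΩY), F ↑x ↑y = F ↑x0 ↑y0 → ∃ T ∈ 𝒯, T.1 x0 = x) ∧
    -- Condition (2): (x0, y) lies in the orbit of (x0, y0)
     (∀ y : ΩY, F ↑x0 ↑y = F ↑x0 ↑y0 → ∃ T ∈ 𝒯, T.1 x0 = x0 ∧ T.2 y0 = y)) := by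
  constructor
  · intro h
    refine ⟨fun x y hxy => ?_, fun y hy => h x0 y hy⟩
    obtain ⟨T, hT, h1, _⟩ := h x y hxy
    exact ⟨T, hT, h1⟩
  · rintro ⟨h1, h2⟩ x y hxy
    obtain ⟨T, hT, hTx⟩ := h1 x y hxy
    obtain ⟨T', hT', hi1, hi2, hi3, hi4⟩ := hinv T hT
    have key : F ↑x0 ↑(T'.2 y) = F ↑x0 ↑y0 := by
      have := hF T hT x0 (T'.2 y)
      rw [hTx] at this
      rw [← this]
      have : T.2 (T'.2 y) = y := congrFun hi4 y
      rw [this, hxy]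
    obtain ⟨S, hS, hS1, hS2⟩ := h2 (T'.2 y) key
    refine ⟨(T.1 ∘ S.1, T.2 ∘ S.2), hcomp S hS T hT, ?_, ?_⟩
    · simp [Function.comp, hS1, hTx]
    · simp only [Function.comp]
      rw [hS2]
      exact congrFun hi4 y
end

section
/- Let F : 𝒳 × 𝒴 → 𝒵 be a bilinear map, Ω_X ⊆ 𝒳, Ω_Y ⊆ 𝒴, and let 𝒯 be a transformation group associated with F on Ω_X × Ω_Y. A pair (x0, y0) ∈ Ω_X × Ω_Y with x0 ≠ 0 and y0 ≠ 0 is identifiable up to 𝒯 if the following two conditions hold: (1) for every (x, y) ∈ Ω_X × Ω_Y with F(x, y) = F(x0, y0), one has x ∈ [x0]^L; and (2) for every y ∈ Ω_Y with F(x0, y) = F(x0, y0), one has y = y0. Furthermore, if F has no non-trivial right annihilator of Ω_X (i.e., F(x, y') = 0 for all x ∈ Ω_X implies y' = 0), and for every (T_X, T_Y) ∈ 𝒯 the equality T_X(x0) = x0 implies that T_X is the identity map on Ω_X, then conditions (1) and (2) are also necessary for identifiability up to 𝒯. -/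
/-- Sufficient condition for identifiability up to a transformation
group 𝒯 associated with a bilinear map F, and its necessity under extra
assumptions (no non-trivial right annihilator of ΩX, and T_X(x0) = x0 only for
the identity component). -/
theorem stmt_2
    {X Y Z : Type*} [AddCommGroup X] [Module ℂ X] [AddCommGroup Y] [Module ℂ Y]
    [AddCommGroup Z] [Module ℂ Z]
    (F : X →ₗ[ℂ] Y →ₗ[ℂ] Z) (ΩX : Set X) (ΩY : Set Y)
    (𝒯 : Set ((ΩX → ΩX) × (ΩY → ΩY)))
    -- 𝒯 is closed under componentwise composition
    (hcomp : ∀ T1 ∈ 𝒯, ∀ T2 ∈ 𝒯, ((T2.1 ∘ T1.1, T2.2 ∘ T1.2) : (ΩX → ΩX) × (ΩY → ΩY)) ∈ 𝒯)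
    -- 𝒯 contains the identity pair
    (hid : ((id : ΩX → ΩX), (id : ΩY → ΩY)) ∈ 𝒯)
    -- every element of 𝒯 has a componentwise inverse in 𝒯
    (hinv : ∀ T ∈ 𝒯, ∃ T' ∈ 𝒯, T'.1 ∘ T.1 = id ∧ T.1 ∘ T'.1 = id ∧
      T'.2 ∘ T.2 = id ∧ T.2 ∘ T'.2 = id)
    -- F is invariant under every transformation in 𝒯
    (hF : ∀ T ∈ 𝒯, ∀ (x : ΩX) (y : ΩY), F ↑(T.1 x) ↑(T.2 y) = F ↑x ↑y)
    (x0 : ΩX) (y0 : ΩY) (hx0 : (x0 : X) ≠ 0) (hy0 : (y0 : Y) ≠ 0) :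
    -- Sufficiency: conditions (1) and (2) imply identifiability up to 𝒯
    (((∀ (x : ΩX) (y : ΩY), F ↑x ↑y = F ↑x0 ↑y0 → ∃ T ∈ 𝒯, T.1 x0 = x) ∧
      (∀ y : ΩY, F ↑x0 ↑y = F ↑x0 ↑y0 → y = y0)) →
      (∀ (x : ΩX) (y : ΩY), F ↑x ↑y = F ↑x0 ↑y0 →
        ∃ T ∈ 𝒯, T.1 x0 = x ∧ T.2 y0 = y)) ∧
    -- Necessity under the extra assumptions
    ((∀ y' : Y, (∀ x ∈ ΩX, F x y' = 0) → y' = 0) →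
     (∀ T ∈ 𝒯, T.1 x0 = x0 → T.1 = (id : ΩX → ΩX)) →
     (∀ (x : ΩX) (y : ΩY), F ↑x ↑y = F ↑x0 ↑y0 →
        ∃ T ∈ 𝒯, T.1 x0 = x ∧ T.2 y0 = y) →
     ((∀ (x : ΩX) (y : ΩY), F ↑x ↑y = F ↑x0 ↑y0 → ∃ T ∈ 𝒯, T.1 x0 = x) ∧
      (∀ y : ΩY, F ↑x0 ↑y = F ↑x0 ↑y0 → y = y0))) := by
  constructor
  · rintro ⟨h1, h2⟩ x y hxy
    obtain ⟨T, hT, hTx⟩ := h1 x y hxy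
    obtain ⟨T', hT', hi1, hi2, hi3, hi4⟩ := hinv T hT
    have hTT' : T.2 (T'.2 y) = y := congrFun hi4 y
    have key : F ↑x0 ↑(T'.2 y) = F ↑x0 ↑y0 := by
      rw [← hF T hT x0 (T'.2 y), hTx, hTT', hxy]
    have hy := h2 (T'.2 y) key
    refine ⟨T, hT, hTx, ?_⟩
    rw [← hy]
    exact hTT'
  · intro hann hfix hident
    constructor
    · intro x y hxy
      obtain ⟨T, hT, h1, h2⟩ := hident x y hxy
      exact ⟨T, hT, h1⟩
    · intro y hy
      obtain ⟨T, hT, h1, h2⟩ := hident x0 y hy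
      have hTid := hfix T hT h1
      have hall : ∀ x' : ΩX, F ↑x' ((y : Y) - ↑y0) = 0 := by
        intro x'
        have h := hF T hT x' y0
        rw [hTid, h2] at h
        simp only [id_eq] at h
        simp [map_sub, h]
      have := hann ((y : Y) - ↑y0) (fun x hx => hall ⟨x, hx⟩)
      exact Subtype.ext (sub_eq_zero.mp this)
end

section
/- Let ω = exp(−2πi/n) and let F ∈ ℂ^{n×n} be the normalized DFT matrix. Let λ0 ∈ ℂ^n be non-vanishing and let X0 ∈ ℂ^{n×N} have at most s nonzero rows. Suppose (λ0, X0) is identifiable up to the scaling–shift transformation group: every pair (λ, X) ∈ ℂ^n × ℂ^{n×N} with X jointly s-sparse and diag(λ)·F·X = diag(λ0)·F·X0 satisfies λ_j = λ0_j/(σ·ω^{jk}) and X_{j,:} = σ·X0_{j−k,:} for all j ∈ ℤ/n, for some nonzero σ ∈ ℂ and some k ∈ ℤ/n. Then N·(n−s) ≥ n−1. -/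
open Matrix

/-- Character sum over `ZMod n`: geometric sum of an `n`-th root of unity. -/
theorem stmt_11_geom_aux (n : ℕ) [NeZero n] (ζ : ℂ) (hζn : ζ ^ n = 1) :
    ∑ j : ZMod n, ζ ^ (j.val) = if ζ = 1 then (n : ℂ) else 0 := by
  have h1 : ∑ j : ZMod n, ζ ^ (j.val) = ∑ i ∈ Finset.range n, ζ ^ i := by
    apply Finset.sum_nbij' (i := fun (j : ZMod n) => j.val) (j := fun i => (i : ZMod n))
    · intro a _; exact Finset.mem_range.mpr (ZMod.val_lt a)
    · intro a _; exact Finset.mem_univ _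
    · intro a _; exact ZMod.natCast_rightInverse a
    · intro a ha; exact ZMod.val_cast_of_lt (Finset.mem_range.mp ha)
    · intro a _; rfl
  rw [h1]
  split_ifs with h
  · simp [h]
  · rw [geom_sum_eq h, hζn]; simp

/-- Necessary sample complexity for BGPC with the DFT matrix and
a joint sparsity constraint: identifiability up to scaling and circular shift
implies N·(n−s) ≥ n−1. -/
theorem stmt_11 {n N s : ℕ} [NeZero n]
    (ω : ℂ) (hω : ω = Complex.exp (-2 * Real.pi * Complex.I / n))
    (F : Matrix (ZMod n) (ZMod n) ℂ)
    (hF : ∀ j k : ZMod n, F j k = ω ^ (j * k).val / (Real.sqrt n : ℂ))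
    (lam0 : ZMod n → ℂ) (X0 : Matrix (ZMod n) (Fin N) ℂ)
    (hlam0 : ∀ j, lam0 j ≠ 0)
    (hX0 : Set.ncard {j : ZMod n | (fun k => X0 j k) ≠ 0} ≤ s)
    (hident : ∀ (lam : ZMod n → ℂ) (X : Matrix (ZMod n) (Fin N) ℂ),
      Set.ncard {j : ZMod n | (fun k => X j k) ≠ 0} ≤ s →
      Matrix.diagonal lam * F * X = Matrix.diagonal lam0 * F * X0 →
      ∃ σ : ℂ, σ ≠ 0 ∧ ∃ k : ZMod n,
        (∀ j : ZMod n, lam j = lam0 j / (σ * ω ^ (j * k).val)) ∧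
        (∀ j : ZMod n, (fun t => X j t) = σ • (fun t => X0 (j - k) t))) :
    N * (n - s) ≥ n - 1 := by
  classical
  by_contra hcon
  push_neg at hcon
  have hcon' : N * (n - s) < n - 1 := hcon
  have hn : 0 < n := Nat.pos_of_ne_zero (NeZero.ne n)
  have hn2 : 2 ≤ n := by omega
  -- basic facts about ω
  have hprim : IsPrimitiveRoot ω n := by
    have h := (Complex.isPrimitiveRoot_exp n (NeZero.ne n)).inv
    rw [← Complex.exp_neg] at h
    rw [hω, show -2 * (Real.pi : ℂ) * Complex.I / (n : ℂ) = -(2 * (Real.pi : ℂ) * Complex.I / (n : ℂ)) by ring]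
    exact h
  have hω1 : ω ^ n = 1 := hprim.pow_eq_one
  have hω0 : ω ≠ 0 := by rw [hω]; exact Complex.exp_ne_zero _
  have hval : ∀ m : ℕ, ω ^ ((m : ZMod n) : ZMod n).val = ω ^ m := by
    intro m
    rw [ZMod.val_natCast]
    conv_rhs => rw [← Nat.mod_add_div m n, pow_add, pow_mul, hω1, one_pow, mul_one]
  have hpow_mul : ∀ j a : ZMod n, ω ^ (j * a).val = (ω ^ a.val) ^ j.val := by
    intro j a
    have : j * a = ((j.val * a.val : ℕ) : ZMod n) := by
      push_cast
      rw [ZMod.natCast_rightInverse j, ZMod.natCast_rightInverse a]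
    rw [this, hval, pow_mul']
  have hconj : (starRingEnd ℂ) ω = ω⁻¹ := by
    rw [hω, ← Complex.exp_conj, ← Complex.exp_neg]
    congr 1
    simp only [map_div₀, _root_.map_mul, _root_.map_neg, map_ofNat, Complex.conj_I,
      Complex.conj_ofReal, Complex.conj_natCast]
    ring
  have hc : (Real.sqrt n : ℂ) * (Real.sqrt n : ℂ) = (n : ℂ) := by
    rw [← Complex.ofReal_mul, Real.mul_self_sqrt (Nat.cast_nonneg n)]; simp
  have hn0 : (n : ℂ) ≠ 0 := Nat.cast_ne_zero.mpr (NeZero.ne n)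
  have hc0 : (Real.sqrt n : ℂ) ≠ 0 := fun h => hn0 (by rw [← hc, h, mul_zero])
  -- the inverse DFT matrix
  set Finv : Matrix (ZMod n) (ZMod n) ℂ := Matrix.of (fun j k => (starRingEnd ℂ) (F k j))
    with hFinv
  have key : Finv * F = 1 := by
    ext j l
    rw [Matrix.mul_apply]
    have hsum : ∀ k : ZMod n, Finv j k * F k l
        = ((ω ^ j.val)⁻¹ * ω ^ l.val) ^ k.val / ((Real.sqrt n : ℂ) * (Real.sqrt n : ℂ)) := by
      intro k
      rw [hFinv]
      simp only [Matrix.of_apply, hF]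
      rw [map_div₀, Complex.conj_ofReal, div_mul_div_comm]
      congr 1
      rw [hpow_mul k j, hpow_mul k l, map_pow, map_pow, hconj, inv_pow, ← mul_pow]
    simp only [hsum]
    rw [← Finset.sum_div, hc]
    set ζ : ℂ := (ω ^ j.val)⁻¹ * ω ^ l.val with hζ
    have hζn : ζ ^ n = 1 := by
      rw [hζ, mul_pow, inv_pow, ← pow_mul, ← pow_mul, mul_comm (j.val) n, mul_comm (l.val) n,
        pow_mul, pow_mul, hω1, one_pow, one_pow]
      simp
    rw [stmt_11_geom_aux n ζ hζn]
    have hζ1 : ζ = 1 ↔ j = l := by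
      rw [hζ, inv_mul_eq_one₀ (pow_ne_zero _ hω0)]
      constructor
      · intro h
        have := hprim.pow_inj (ZMod.val_lt j) (ZMod.val_lt l) h
        have h2 := congrArg (fun m : ℕ => (m : ZMod n)) this
        simpa [ZMod.natCast_rightInverse j, ZMod.natCast_rightInverse l] using h2
      · intro h; rw [h]
    rw [Matrix.one_apply]
    split_ifs with h1 h2 h2
    · exact div_self hn0
    · exact absurd (hζ1.mp h1) h2
    · exact absurd h2 (fun h => h1 (hζ1.mpr h))
    · simp
  have hFF : F * Finv = 1 := mul_eq_one_comm.mpr key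
  set M : Matrix (ZMod n) (Fin N) ℂ := F * X0 with hM
  -- zero rows of X0
  set supp0 : Finset (ZMod n) := Finset.univ.filter (fun j => (fun k => X0 j k) ≠ 0) with hsupp0
  have hsupp0card : supp0.card ≤ s := by
    have : {j : ZMod n | (fun k => X0 j k) ≠ 0} = ↑supp0 := by
      ext j; simp [hsupp0]
    rw [this, Set.ncard_coe_finset] at hX0
    exact hX0
  have hZcard : n - s ≤ supp0ᶜ.card := by
    rw [Finset.card_compl]
    simp only [ZMod.card]
    omega
  obtain ⟨Z', hZ'sub, hZ'card⟩ := Finset.exists_subset_card_eq hZcard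
  have hZ'zero : ∀ j ∈ Z', ∀ t, X0 j t = 0 := by
    intro j hj t
    have := hZ'sub hj
    simp [hsupp0, Finset.mem_compl, Finset.mem_filter, not_not] at this
    exact congrFun this t
  -- the linear map whose kernel encodes admissible modulations
  set Φ : (ZMod n → ℂ) →ₗ[ℂ] ({x // x ∈ Z'} × Fin N → ℂ) :=
    { toFun := fun μ p => ∑ k, Finv p.1.1 k * μ k * M k p.2
      map_add' := by
        intro μ ν; funext p
        simp only [Pi.add_apply, mul_add, add_mul, Finset.sum_add_distrib]
      map_smul' := by
        intro c μ; funext p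
        simp only [Pi.smul_apply, smul_eq_mul, RingHom.id_apply, Finset.mul_sum]
        exact Finset.sum_congr rfl (fun k _ => by ring) } with hΦ
  have hΦapply : ∀ (μ : ZMod n → ℂ) (j : ZMod n) (t : Fin N),
      (Finv * (Matrix.diagonal μ * M)) j t = ∑ k, Finv j k * μ k * M k t := by
    intro μ j t
    rw [Matrix.mul_apply]
    exact Finset.sum_congr rfl (fun k _ => by rw [Matrix.diagonal_mul]; ring)
  -- kernel dimension at least 2
  have hker : 2 ≤ Module.finrank ℂ (LinearMap.ker Φ) := by
    have h1 := LinearMap.finrank_range_add_finrank_ker Φ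
    have h2 : Module.finrank ℂ (ZMod n → ℂ) = n := by simp [Module.finrank_pi]
    have h3 : Module.finrank ℂ ↥(LinearMap.range Φ) ≤ (n - s) * N := by
      have h5 := Submodule.finrank_le (LinearMap.range Φ)
      have h4 : Module.finrank ℂ ({x // x ∈ Z'} × Fin N → ℂ) = (n - s) * N := by
        simp [Module.finrank_pi, Fintype.card_prod, Fintype.card_coe, hZ'card]
      omega
    have : (n - s) * N = N * (n - s) := Nat.mul_comm _ _
    omega
  -- the all-ones vector lies in the kernel
  set onev : ZMod n → ℂ := fun _ => (1 : ℂ) with honev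
  have honemem : onev ∈ LinearMap.ker Φ := by
    rw [LinearMap.mem_ker]
    funext p
    have h6 : Φ onev p = (Finv * (Matrix.diagonal onev * M)) p.1.1 p.2 :=
      (hΦapply onev p.1.1 p.2).symm
    rw [h6]
    have h7 : Matrix.diagonal onev = 1 := by
      ext a b; by_cases h : a = b <;> simp [honev, Matrix.diagonal, h, Matrix.one_apply]
    rw [h7, Matrix.one_mul, hM, ← Matrix.mul_assoc, key, Matrix.one_mul]
    exact hZ'zero p.1.1 p.1.2 p.2
  -- a kernel vector independent of the all-ones vector
  have honev0 : onev ≠ 0 := by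
    intro h0
    have := congrFun h0 0
    simp [honev] at this
  obtain ⟨w, hwker, hwspan⟩ : ∃ w ∈ LinearMap.ker Φ, w ∉ Submodule.span ℂ {onev} := by
    by_contra h
    push_neg at h
    have hle : LinearMap.ker Φ ≤ Submodule.span ℂ {onev} := h
    have hmono := Submodule.finrank_mono hle
    rw [finrank_span_singleton honev0] at hmono
    omega
  -- avoid finitely many bad values of t
  have hbadA : ∀ j : ZMod n, {t : ℂ | 1 + t * w j = 0}.Subsingleton := by
    intro j t1 ht1 t2 ht2
    simp only [Set.mem_setOf_eq] at ht1 ht2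
    have hwj : w j ≠ 0 := by
      intro h
      rw [h, mul_zero, add_zero] at ht1
      exact one_ne_zero ht1
    have : (t1 - t2) * w j = 0 := by
      have := sub_eq_zero.mpr (ht1.trans ht2.symm)
      ring_nf at this ⊢
      linear_combination this
    rcases mul_eq_zero.mp this with h | h
    · exact sub_eq_zero.mp h
    · exact absurd h hwj
  have hbadB : ∀ k : ZMod n,
      {t : ℂ | ∃ σ : ℂ, ∀ j : ZMod n, 1 + t * w j = σ * ω ^ (j * k).val}.Subsingleton := by
    intro k t1 ht1 t2 ht2
    obtain ⟨σ1, h1⟩ := ht1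
    obtain ⟨σ2, h2⟩ := ht2
    by_contra hne
    have ht12 : t1 - t2 ≠ 0 := sub_ne_zero.mpr hne
    set c : ℂ := (σ1 - σ2) / (t1 - t2) with hcdef
    have hwc : ∀ j : ZMod n, w j = c * ω ^ (j * k).val := by
      intro j
      have : (t1 - t2) * w j = (σ1 - σ2) * ω ^ (j * k).val := by
        linear_combination (h1 j) - (h2 j)
      rw [hcdef, div_mul_eq_mul_div, eq_div_iff ht12]
      linear_combination this
    have hv0 : ω ^ ((0 : ZMod n) * k).val = 1 := by
      rw [zero_mul, ZMod.val_zero, pow_zero]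
    have hcoef : σ1 - t1 * c = 1 := by
      have := h1 0
      rw [hwc 0, hv0] at this
      linear_combination -this
    have hvone : ∀ j : ZMod n, ω ^ (j * k).val = 1 := by
      intro j
      have := h1 j
      rw [hwc j] at this
      have h3 : 1 = (σ1 - t1 * c) * ω ^ (j * k).val := by linear_combination this
      rw [hcoef, one_mul] at h3
      exact h3.symm
    have : w ∈ Submodule.span ℂ {onev} := by
      rw [Submodule.mem_span_singleton]
      exact ⟨c, by funext j; simp [honev, hwc j, hvone j]⟩
    exact hwspan this
  set Bad : Set ℂ := (⋃ j : ZMod n, {t : ℂ | 1 + t * w j = 0}) ∪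
      (⋃ k : ZMod n, {t : ℂ | ∃ σ : ℂ, ∀ j : ZMod n, 1 + t * w j = σ * ω ^ (j * k).val})
    with hBad
  have hBadfin : Bad.Finite := by
    apply Set.Finite.union <;>
      exact Set.finite_iUnion (fun i => Set.Subsingleton.finite (by first | exact hbadA i | exact hbadB i))
  obtain ⟨t, ht⟩ := hBadfin.infinite_compl.nonempty
  have ht' : t ∉ Bad := ht
  rw [hBad] at ht'
  simp only [Set.mem_union, Set.mem_iUnion, Set.mem_setOf_eq, not_or, not_exists] at ht'
  obtain ⟨htA, htB⟩ := ht'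
  -- the perturbed modulation
  set μ : ZMod n → ℂ := fun j => 1 + t * w j with hμdef
  have hμ0 : ∀ j, μ j ≠ 0 := fun j h => htA j h
  have hμker : μ ∈ LinearMap.ker Φ := by
    have : μ = onev + t • w := by
      funext j; simp [hμdef, honev]
    rw [this]
    exact Submodule.add_mem _ honemem (Submodule.smul_mem _ t hwker)
  -- the alternative pair (lam, X)
  set X : Matrix (ZMod n) (Fin N) ℂ := Finv * (Matrix.diagonal μ * M) with hX
  set lam : ZMod n → ℂ := fun j => lam0 j / μ j with hlam
  have hXzero : ∀ j ∈ Z', ∀ t2 : Fin N, X j t2 = 0 := by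
    intro j hj t2
    rw [hX, hΦapply μ j t2]
    have h8 : Φ μ = 0 := LinearMap.mem_ker.mp hμker
    have := congrFun h8 (⟨j, hj⟩, t2)
    exact this
  have hXsparse : Set.ncard {j : ZMod n | (fun k => X j k) ≠ 0} ≤ s := by
    have hsub : {j : ZMod n | (fun k => X j k) ≠ 0} ⊆ ↑(Z'ᶜ) := by
      intro j hj
      simp only [Set.mem_setOf_eq] at hj
      simp only [Finset.coe_compl, Set.mem_compl_iff, Finset.mem_coe]
      intro hjZ
      exact hj (funext (hXzero j hjZ))
    have := Set.ncard_le_ncard hsub (Set.toFinite _)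
    rw [Set.ncard_coe_finset, Finset.card_compl, hZ'card] at this
    simp only [ZMod.card] at this
    omega
  have heq : Matrix.diagonal lam * F * X = Matrix.diagonal lam0 * F * X0 := by
    rw [hX, Matrix.mul_assoc (Matrix.diagonal lam) F _, ← Matrix.mul_assoc F Finv _, hFF,
      Matrix.one_mul, ← Matrix.mul_assoc, Matrix.diagonal_mul_diagonal,
      Matrix.mul_assoc (Matrix.diagonal lam0) F X0, ← hM]
    have hfun : (fun i => lam i * μ i) = lam0 := by
      funext j2
      simp only [hlam]
      exact div_mul_cancel₀ (lam0 j2) (hμ0 j2)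
    rw [hfun]
  obtain ⟨σ, hσ, k, hlameq, -⟩ := hident lam X hXsparse heq
  apply htB k σ
  intro j
  have h9 : lam0 j / μ j = lam0 j / (σ * ω ^ (j * k).val) := hlameq j
  have hden : σ * ω ^ (j * k).val ≠ 0 := mul_ne_zero hσ (pow_ne_zero _ hω0)
  rw [div_eq_div_iff (hμ0 j) hden] at h9
  have h11 := mul_left_cancel₀ (hlam0 j) h9
  exact h11.symm
end

section
/- Let ω = exp(−2πi/n) and let F ∈ ℂ^{n×n} be the normalized DFT matrix. Let λ0 ∈ ℂ^n be non-vanishing, and let X0 ∈ ℂ^{n×N} be a nonzero matrix whose joint support J ⊆ ℤ/n (with |J| = s) is periodic. Then (λ0, X0) is not identifiable up to the scaling–shift transformation group: there exists a pair (λ1, X1) ∈ ℂ^n × ℂ^{n×N} such that X1 is jointly s-sparse, diag(λ1)·F·X1 = diag(λ0)·F·X0, and there is no nonzero σ ∈ ℂ and k ∈ ℤ/n with λ1_j = λ0_j/(σ·ω^{jk}) for all j ∈ ℤ/n and X1_{j,:} = σ·X0_{j−k,:} for all j ∈ ℤ/n. -/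
open Matrix

/-- If the joint support of X0 is periodic, then (λ0, X0) is not
identifiable up to the scaling–shift transformation group. -/
theorem stmt_12 {n N s : ℕ} [NeZero n]
    (ω : ℂ) (hω : ω = Complex.exp (-2 * Real.pi * Complex.I / n))
    (F : Matrix (ZMod n) (ZMod n) ℂ)
    (hF : ∀ j k : ZMod n, F j k = ω ^ (j * k).val / (Real.sqrt n : ℂ))
    (lam0 : ZMod n → ℂ) (X0 : Matrix (ZMod n) (Fin N) ℂ)
    (hlam0 : ∀ j, lam0 j ≠ 0)
    (hX0 : X0 ≠ 0)
    (hs : Set.ncard {j : ZMod n | (fun k => X0 j k) ≠ 0} = s)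
    (hper : ∃ ℓ : ZMod n, ℓ ≠ 0 ∧
      (fun j => j + ℓ) '' {j : ZMod n | (fun k => X0 j k) ≠ 0} =
        {j : ZMod n | (fun k => X0 j k) ≠ 0}) :
    ∃ (lam1 : ZMod n → ℂ) (X1 : Matrix (ZMod n) (Fin N) ℂ),
      Set.ncard {j : ZMod n | (fun k => X1 j k) ≠ 0} ≤ s ∧
      Matrix.diagonal lam1 * F * X1 = Matrix.diagonal lam0 * F * X0 ∧
      ¬ ∃ σ : ℂ, σ ≠ 0 ∧ ∃ k : ZMod n,
        (∀ j : ZMod n, lam1 j = lam0 j / (σ * ω ^ (j * k).val)) ∧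
        (∀ j : ZMod n, (fun t => X1 j t) = σ • (fun t => X0 (j - k) t)) := by
  obtain ⟨ℓ, hℓ, hJ⟩ := hper
  -- ω is a primitive n-th root of unity
  have hprim : IsPrimitiveRoot ω n := by
    have h := Complex.isPrimitiveRoot_exp n (NeZero.ne n)
    have hrw : ω = (Complex.exp (2 * Real.pi * Complex.I / n))⁻¹ := by
      rw [hω, ← Complex.exp_neg]
      congr 1
      ring
    rw [hrw]
    exact h.inv
  have hωn : ω ^ n = 1 := hprim.pow_eq_one
  have hωabs : ‖ω‖ = 1 := by
    rw [hω]
    have : (-2 * (Real.pi : ℂ) * Complex.I / n) = ((-2 * Real.pi / n : ℝ) : ℂ) * Complex.I := by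
      push_cast
      ring
    rw [this, Complex.norm_exp_ofReal_mul_I]
  have hnsq : Complex.normSq ω = 1 := by
    rw [Complex.normSq_eq_norm_sq, hωabs]
    norm_num
  -- power of ω depends only on residue mod n
  have key : ∀ x : ℕ, ω ^ (x % n) = ω ^ x := by
    intro x
    conv_rhs => rw [← Nat.div_add_mod x n]
    rw [pow_add, pow_mul, hωn, one_pow, one_mul]
  have hmul : ∀ a b : ZMod n, ω ^ (a + b).val = ω ^ a.val * ω ^ b.val := by
    intro a b
    rw [ZMod.val_add, key, pow_add]
  -- ω^ℓ ≠ 1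
  have hne1 : ω ^ (ℓ.val) ≠ 1 := by
    apply hprim.pow_ne_one_of_pos_of_lt
    · exact (fun h => hℓ ((ZMod.val_eq_zero ℓ).mp h))
    · exact ZMod.val_lt ℓ
  -- the modulation factor
  set μ : ZMod n → ℂ := fun j => 1 + (1/2 : ℂ) * ω ^ ((j * ℓ).val) with hμdef
  have hpow_nsq : ∀ m : ℕ, Complex.normSq (ω ^ m) = 1 := by
    intro m
    rw [_root_.map_pow, hnsq, one_pow]
  have hμ : ∀ j, μ j ≠ 0 := by
    intro j h
    have h2 : ω ^ ((j * ℓ).val) = -2 := by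
      simp only [hμdef] at h
      linear_combination 2 * h
    have h3 := hpow_nsq ((j * ℓ).val)
    rw [h2] at h3
    norm_num [Complex.normSq_apply] at h3
  set J : Set (ZMod n) := {j : ZMod n | (fun k => X0 j k) ≠ 0} with hJdef
  have hJshift : ∀ j : ZMod n, j ∉ J → j - ℓ ∉ J := by
    intro j hj hmem
    apply hj
    rw [← hJ]
    exact ⟨j - ℓ, hmem, by simp⟩
  refine ⟨fun j => lam0 j / μ j, fun j t => X0 j t + (1/2 : ℂ) * X0 (j - ℓ) t, ?_, ?_, ?_⟩
  · -- sparsity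
    rw [← hs]
    apply Set.ncard_le_ncard _ (Set.toFinite _)
    intro j hj
    by_contra hjJ
    apply hj
    have h1 : X0 j = 0 := by
      by_contra h
      exact hjJ (fun hh => h (funext fun t => congrFun hh t))
    have h2 : X0 (j - ℓ) = 0 := by
      by_contra h
      exact hJshift j (fun hh => hjJ hh) (fun hh => h (funext fun t => congrFun hh t))
    funext t
    simp [congrFun h1 t, congrFun h2 t]
  · -- measurement equality
    ext j t
    simp only [Matrix.mul_apply, Matrix.diagonal_apply, Finset.sum_ite_eq, Finset.mem_univ,
      if_true]
    have hsum : ∀ m, (if j = m then lam0 j / μ j else 0) = (if j = m then lam0 j / μ j else 0) :=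
      fun m => rfl
    -- reduce both sides
    have lhs_eq : ∀ (lam : ZMod n → ℂ) (X : Matrix (ZMod n) (Fin N) ℂ),
        (∑ m, (∑ x, Matrix.diagonal lam j x * F x m) * X m t)
          = lam j * ∑ m, F j m * X m t := by
      intro lam X
      rw [Finset.mul_sum]
      apply Finset.sum_congr rfl
      intro m _
      rw [Finset.sum_eq_single j]
      · simp [Matrix.diagonal_apply_eq]; ring
      · intro x _ hx
        simp [Matrix.diagonal_apply_ne' lam hx]
      · simp
    show (∑ m, (∑ x, Matrix.diagonal (fun j => lam0 j / μ j) j x * F x m) *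
        (X0 m t + (1/2 : ℂ) * X0 (m - ℓ) t))
      = ∑ m, (∑ x, Matrix.diagonal lam0 j x * F x m) * X0 m t
    rw [lhs_eq (fun j => lam0 j / μ j) (fun j t => X0 j t + (1/2 : ℂ) * X0 (j - ℓ) t),
      lhs_eq lam0 X0]
    have hshift : (∑ m, F j m * ((1/2 : ℂ) * X0 (m - ℓ) t))
        = (1/2 : ℂ) * ω ^ ((j * ℓ).val) * ∑ m, F j m * X0 m t := by
      have := Equiv.sum_comp (Equiv.addRight ℓ) (fun m => F j m * ((1/2 : ℂ) * X0 (m - ℓ) t))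
      rw [← this]
      rw [Finset.mul_sum]
      apply Finset.sum_congr rfl
      intro m _
      simp only [Equiv.coe_addRight, add_sub_cancel_right]
      rw [hF j (m + ℓ), hF j m, mul_add, hmul]
      ring
    have hsplit : (∑ m, F j m * (X0 m t + (1/2 : ℂ) * X0 (m - ℓ) t))
        = μ j * ∑ m, F j m * X0 m t := by
      have : (∑ m, F j m * (X0 m t + (1/2 : ℂ) * X0 (m - ℓ) t))
          = (∑ m, F j m * X0 m t) + ∑ m, F j m * ((1/2 : ℂ) * X0 (m - ℓ) t) := by
        rw [← Finset.sum_add_distrib]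
        apply Finset.sum_congr rfl
        intro m _
        ring
      rw [this, hshift, hμdef]
      ring
    rw [hsplit, div_mul_eq_mul_div, mul_left_comm]
    exact mul_div_cancel_left₀ _ (hμ j)
  · -- no equivalence
    rintro ⟨σ, hσ, k, hlam, -⟩
    have hωne : ω ≠ 0 := by
      intro h
      rw [h] at hωabs
      simp at hωabs
    have heq : ∀ j : ZMod n, μ j = σ * ω ^ ((j * k).val) := by
      intro j
      have h := hlam j
      have hd : σ * ω ^ ((j * k).val) ≠ 0 := mul_ne_zero hσ (pow_ne_zero _ hωne)
      simp only at h
      rw [div_eq_div_iff (hμ j) hd] at h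
      exact (mul_left_cancel₀ (hlam0 j) h).symm
    -- at j = 0 : σ = 3/2
    have h0 : σ = 3/2 := by
      have h := heq 0
      simp only [hμdef, zero_mul, ZMod.val_zero, pow_zero, mul_one] at h
      linear_combination -h
    -- at j = 1
    have h1 : 1 + (1/2 : ℂ) * ω ^ (ℓ.val) = (3/2 : ℂ) * ω ^ (k.val) := by
      have h := heq 1
      rw [h0] at h
      simpa only [hμdef, one_mul] using h
    -- take norms
    set z : ℂ := ω ^ (ℓ.val) with hz
    have hznsq : Complex.normSq z = 1 := hpow_nsq _
    have hknsq : Complex.normSq (ω ^ (k.val)) = 1 := hpow_nsq _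
    have habs : Complex.normSq (1 + (1/2 : ℂ) * z) = 9/4 := by
      rw [h1, _root_.map_mul, hknsq]
      rw [show Complex.normSq (3/2 : ℂ) = 9/4 by
        simp [Complex.normSq_apply]; norm_num]
      ring
    have hre : z.re = 1 := by
      have e1 : (1 + (1/2 : ℂ) * z).re = 1 + z.re / 2 := by
        simp [Complex.add_re, Complex.mul_re, Complex.one_re]
        ring
      have e2 : (1 + (1/2 : ℂ) * z).im = z.im / 2 := by
        simp [Complex.add_im, Complex.mul_im]
        ring
      rw [Complex.normSq_apply, e1, e2] at habs
      rw [Complex.normSq_apply] at hznsq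
      nlinarith [sq_nonneg z.im, sq_nonneg (z.re - 1)]
    have him : z.im = 0 := by
      rw [Complex.normSq_apply, hre] at hznsq
      nlinarith
    have hz1 : z = 1 := by
      apply Complex.ext
      · simpa using hre
      · simpa using him
    exact hne1 hz1
end

section
/- If n ≥ 4 and the index set J ⊆ ℤ/n is friendly, then |J| ≥ 3. -/
/-- An index set `J ⊆ ℤ/n` with `|J| = s` is friendly if for every choice of
`n − s` distinct shifts, the shifted copies of `J` cover at least `n − 1`
indices and are connected (two shifted copies being adjacent when they
intersect). By convention, the full set `ℤ/n` is friendly. -/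
def Friendly {n : ℕ} [NeZero n] (J : Set (ZMod n)) : Prop :=
  J = Set.univ ∨
    ∀ K : Finset (ZMod n), K.card = n - J.ncard →
      (n - 1 ≤ Set.ncard (⋃ k ∈ K, (fun j => j + k) '' J)) ∧
      (SimpleGraph.fromRel (fun k1 k2 : {k // k ∈ K} =>
        (((fun j => j + (k1 : ZMod n)) '' J) ∩
          ((fun j => j + (k2 : ZMod n)) '' J)).Nonempty)).Connected

lemma not_connected_of_isolated {V : Type*} (G : SimpleGraph V) (v w : V)
    (hvw : v ≠ w) (h : ∀ x, ¬ G.Adj v x) : ¬ G.Connected := by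
  intro hc
  obtain ⟨p⟩ := hc.preconnected v w
  cases p with
  | nil => exact hvw rfl
  | cons h' _ => exact h _ h'

/-- If n ≥ 4 and J ⊆ ℤ/n is friendly, then |J| ≥ 3. -/
theorem stmt_15 {n : ℕ} [NeZero n] (hn : 4 ≤ n) (J : Set (ZMod n))
    (hJ : Friendly J) : 3 ≤ J.ncard := by
  by_contra hlt
  push_neg at hlt
  have hcard : Fintype.card (ZMod n) = n := ZMod.card n
  rcases hJ with hJ | hJ
  · rw [hJ, Set.ncard_univ, Nat.card_eq_fintype_card, hcard] at hlt
    omega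
  · have hs : J.ncard ≤ 2 := by omega
    interval_cases h : J.ncard
    · -- ncard = 0
      have hJ0 : J = ∅ := (Set.ncard_eq_zero J.toFinite).mp h
      obtain ⟨h1, _⟩ := hJ (Finset.univ) (by simp [hcard, h])
      rw [hJ0] at h1
      simp at h1
      omega
    · -- ncard = 1
      obtain ⟨a, ha⟩ := Set.ncard_eq_one.mp h
      set K : Finset (ZMod n) := Finset.univ.erase 0 with hK
      have hKcard : K.card = n - 1 := by
        rw [hK, Finset.card_erase_of_mem (Finset.mem_univ _), Finset.card_univ, hcard]
      obtain ⟨_, h2⟩ := hJ K hKcard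
      have hex : ∃ k1 ∈ K, ∃ k2 ∈ K, k1 ≠ k2 := Finset.one_lt_card.mp (by omega)
      obtain ⟨k1, hk1, k2, hk2, hne⟩ := hex
      refine not_connected_of_isolated _ ⟨k1, hk1⟩ ⟨k2, hk2⟩ (by simpa using hne) ?_ h2
      intro x hadj
      rw [SimpleGraph.fromRel_adj] at hadj
      obtain ⟨hne', hrel⟩ := hadj
      have hxne : k1 ≠ (x : ZMod n) := fun hh => hne' (Subtype.ext hh)
      rcases hrel with ⟨y, hy1, hy2⟩ | ⟨y, hy1, hy2⟩ <;>
        simp only [ha, Set.image_singleton, Set.mem_singleton_iff] at hy1 hy2 <;>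
        first
        | exact hxne (by linear_combination hy2 - hy1)
        | exact hxne (by linear_combination hy1 - hy2)
    · -- ncard = 2
      obtain ⟨a, b, hab, hJab⟩ := Set.ncard_eq_two.mp h
      set d : ZMod n := b - a with hd
      have hd0 : d ≠ 0 := sub_ne_zero.mpr (Ne.symm hab)
      have hb : b = a + d := by rw [hd]; ring
      by_cases h2d : d + d = 0
      · -- cover fails
        set K : Finset (ZMod n) := Finset.univ \ {0, d} with hK
        have hKcard : K.card = n - 2 := by
          rw [hK, Finset.card_sdiff_of_subset (Finset.subset_univ _), Finset.card_univ, hcard,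
            Finset.card_insert_of_notMem (by simpa using hd0.symm), Finset.card_singleton]
        obtain ⟨h1, _⟩ := hJ K hKcard
        have hUnion : (⋃ k ∈ K, (fun j => j + k) '' J) = (fun k => a + k) '' ↑K := by
          ext y
          simp only [Set.mem_iUnion, Set.mem_image, hJab, Set.mem_insert_iff,
            Set.mem_singleton_iff, Finset.mem_coe, exists_prop]
          constructor
          · rintro ⟨k, hk, j, (rfl | rfl), rfl⟩
            · exact ⟨k, hk, by ring⟩
            · refine ⟨d + k, ?_, by rw [hb]; ring⟩
              simp only [hK, Finset.mem_sdiff, Finset.mem_univ, Finset.mem_insert,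
                Finset.mem_singleton, true_and, not_or] at hk ⊢
              constructor
              · intro hh
                exact hk.2 (by linear_combination hh - h2d)
              · intro hh
                exact hk.1 (by linear_combination hh)
          · rintro ⟨k, hk, rfl⟩
            exact ⟨k, hk, a, Or.inl rfl, by ring⟩
        rw [hUnion, Set.ncard_image_of_injective _ (add_right_injective a),
          Set.ncard_coe_finset, hKcard] at h1
        omega
      · -- connectivity fails: d is isolated when 0 and 2d are removed
        set K : Finset (ZMod n) := Finset.univ \ {0, d + d} with hK
        have hKcard : K.card = n - 2 := by
          rw [hK, Finset.card_sdiff_of_subset (Finset.subset_univ _), Finset.card_univ, hcard,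
            Finset.card_insert_of_notMem (by simpa using (Ne.symm h2d)), Finset.card_singleton]
        obtain ⟨_, h2⟩ := hJ K hKcard
        have hdK : d ∈ K := by
          simp only [hK, Finset.mem_sdiff, Finset.mem_univ, Finset.mem_insert,
            Finset.mem_singleton, true_and, not_or]
          exact ⟨hd0, fun hh => hd0 (by linear_combination -hh)⟩
        have hex : ∃ k1 ∈ K, ∃ k2 ∈ K, k1 ≠ k2 := Finset.one_lt_card.mp (by omega)
        obtain ⟨k1, hk1, k2, hk2, hne⟩ := hex
        have hw : ∃ w ∈ K, w ≠ d := by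
          by_cases hq : k1 = d
          · exact ⟨k2, hk2, by rw [← hq]; exact hne.symm⟩
          · exact ⟨k1, hk1, hq⟩
        obtain ⟨w, hwK, hwd⟩ := hw
        refine not_connected_of_isolated _ ⟨d, hdK⟩ ⟨w, hwK⟩
          (fun hh => hwd (congrArg Subtype.val hh).symm) ?_ h2
        intro x hadj
        rw [SimpleGraph.fromRel_adj] at hadj
        obtain ⟨hne', hrel⟩ := hadj
        have hxd : (x : ZMod n) ≠ d := fun hh => hne' (Subtype.ext hh.symm)
        have hxK := x.2
        simp only [hK, Finset.mem_sdiff, Finset.mem_univ, Finset.mem_insert,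
          Finset.mem_singleton, true_and, not_or] at hxK
        obtain ⟨hx0, hx2d⟩ := hxK
        have hJ' : J = {a, a + d} := by rw [hJab, hb]
        rcases hrel with ⟨y, hy1, hy2⟩ | ⟨y, hy1, hy2⟩ <;>
          simp only [hJ', Set.mem_image, Set.mem_insert_iff, Set.mem_singleton_iff] at hy1 hy2 <;>
          obtain ⟨j1, hj1, e1⟩ := hy1 <;>
          obtain ⟨j2, hj2, e2⟩ := hy2 <;>
          have heq := e1.trans e2.symm <;>
          rcases hj1 with rfl | rfl <;>
          rcases hj2 with rfl | rfl <;>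
          first
          | exact hxd (by linear_combination heq)
          | exact hxd (by linear_combination -heq)
          | exact hx0 (by linear_combination heq)
          | exact hx0 (by linear_combination -heq)
          | exact hx2d (by linear_combination heq)
          | exact hx2d (by linear_combination -heq)
end

section
/- If J ⊆ ℤ/n satisfies |J| ≥ 3 and J is contiguous, i.e., J = {a, a+1, …, a+|J|−1} (mod n) for some a ∈ ℤ/n, then J is friendly. -/
lemma cast_inj_aux {n : ℕ} [NeZero n] {i i' : ℕ} (hi : i < n) (hi' : i' < n)
    (h : (i : ZMod n) = i') : i = i' := by
  have := congrArg ZMod.val h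
  rwa [ZMod.val_cast_of_lt hi, ZMod.val_cast_of_lt hi'] at this

lemma cover_lemma {n : ℕ} [NeZero n] {a : ZMod n} {s : ℕ} (hs1 : 1 ≤ s) (hsn : s < n)
    {J : Set (ZMod n)} (hJ : ∀ x, x ∈ J ↔ ∃ i, i < s ∧ a + (i : ZMod n) = x)
    {K : Finset (ZMod n)} (hK : K.card = n - s) :
    n - 1 ≤ Set.ncard (⋃ k ∈ K, (fun j => j + k) '' J) := by
  set U : Set (ZMod n) := ⋃ k ∈ K, (fun j => j + k) '' J with hU
  have hcompl : U.ncard + Uᶜ.ncard = n := by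
    simpa [Nat.card_eq_fintype_card] using Set.ncard_add_ncard_compl U
  suffices hle : Uᶜ.ncard ≤ 1 by omega
  -- the finset version of J
  set Jf : Finset (ZMod n) := Finset.image (fun i : ℕ => a + (i : ZMod n)) (Finset.range s)
    with hJf
  have hJfmem : ∀ x, x ∈ Jf ↔ x ∈ J := by
    intro x
    simp [hJf, hJ, Finset.mem_image]
  have hJfcard : Jf.card = s := by
    rw [hJf, Finset.card_image_of_injOn, Finset.card_range]
    intro i hi i' hi' h
    simp only [Finset.coe_range, Set.mem_Iio] at hi hi'
    exact cast_inj_aux (lt_trans hi hsn) (lt_trans hi' hsn) (by simpa using h)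
  have hmemc : ∀ x : ZMod n, x ∈ Uᶜ ↔ ∀ k ∈ K, ∀ j ∈ J, j + k ≠ x := by
    intro x
    constructor
    · intro hx k hk j hj heq
      exact hx (Set.mem_biUnion hk ⟨j, hj, heq⟩)
    · intro h hx
      obtain ⟨k, hk, j, hj, heq⟩ := by
        simpa only [hU, Set.mem_iUnion, Set.mem_image, exists_prop] using hx
      exact h k hk j hj heq
  have key : ∀ x ∈ Uᶜ, Finset.image (fun j => x - j) Jf = Kᶜ := by
    intro x hx
    apply Finset.eq_of_subset_of_card_le
    · intro y hy
      simp only [Finset.mem_image] at hy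
      obtain ⟨j, hj, rfl⟩ := hy
      rw [Finset.mem_compl]
      intro hmem
      exact (hmemc x).1 hx _ hmem j ((hJfmem j).1 hj) (by ring)
    · rw [Finset.card_image_of_injective _ sub_right_injective, hJfcard,
        Finset.card_compl, ZMod.card, hK]
      omega
  -- subsingleton
  have hss : ∀ x ∈ Uᶜ, ∀ x' ∈ Uᶜ, x = x' := by
    intro x hx x' hx'
    by_contra hne
    have hDD : Finset.image (fun j => x - j) Jf = Finset.image (fun j => x' - j) Jf := by
      rw [key x hx, key x' hx']
    have fwd : ∀ j ∈ Jf, (x' - x) + j ∈ Jf := by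
      intro j hj
      have : x - j ∈ Finset.image (fun j => x' - j) Jf := by
        rw [← hDD]; exact Finset.mem_image_of_mem _ hj
      obtain ⟨j', hj', hjj'⟩ := Finset.mem_image.1 this
      have : j' = (x' - x) + j := by
        have := hjj'; linear_combination -this
      rwa [← this]
    have bwd : ∀ j ∈ Jf, (x - x') + j ∈ Jf := by
      intro j hj
      have : x' - j ∈ Finset.image (fun j => x - j) Jf := by
        rw [hDD]; exact Finset.mem_image_of_mem _ hj
      obtain ⟨j', hj', hjj'⟩ := Finset.mem_image.1 this
      have : j' = (x - x') + j := by
        have := hjj'; linear_combination -this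
      rwa [← this]
    set d := x' - x with hd
    have hdne : d ≠ 0 := sub_ne_zero.2 (Ne.symm hne)
    have haJ : a ∈ Jf := by
      rw [hJfmem, hJ]; exact ⟨0, hs1, by simp⟩
    have h1 : d + a ∈ Jf := fwd a haJ
    rw [hJfmem, hJ] at h1
    obtain ⟨i, hi, hai⟩ := h1
    have hid : (i : ZMod n) = d := by linear_combination hai
    have hi1 : 1 ≤ i := by
      rcases Nat.eq_zero_or_pos i with h | h
      · exfalso; apply hdne; rw [← hid, h]; simp
      · exact h
    have h2 : a - 1 ∈ Jf := by
      have h3 : (x - x') + (a + (i - 1 : ℕ)) ∈ Jf := by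
        apply bwd
        rw [hJfmem, hJ]
        exact ⟨i - 1, by omega, rfl⟩
      have : (x - x') + (a + (i - 1 : ℕ)) = a - 1 := by
        have hc : ((i - 1 : ℕ) : ZMod n) = d - 1 := by
          rw [Nat.cast_sub hi1, hid]; simp
        rw [hc, hd]; ring
      rwa [this] at h3
    rw [hJfmem, hJ] at h2
    obtain ⟨i', hi', hai'⟩ := h2
    have : ((i' + 1 : ℕ) : ZMod n) = ((0 : ℕ) : ZMod n) := by
      push_cast
      linear_combination hai'
    have := cast_inj_aux (by omega) (Nat.pos_of_ne_zero (NeZero.ne n)) this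
    omega
  rcases Set.eq_empty_or_nonempty Uᶜ with h | ⟨x, hx⟩
  · simp [h]
  · have : Uᶜ ⊆ {x} := fun y hy => (hss y hy x hx)
    calc Uᶜ.ncard ≤ ({x} : Set (ZMod n)).ncard :=
          Set.ncard_le_ncard this (Set.finite_singleton x)
      _ = 1 := Set.ncard_singleton x

lemma conn_lemma {n : ℕ} [NeZero n] {a : ZMod n} {s : ℕ} (hs3 : 3 ≤ s) (hsn : s < n)
    {J : Set (ZMod n)} (hJ : ∀ x, x ∈ J ↔ ∃ i, i < s ∧ a + (i : ZMod n) = x)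
    {K : Finset (ZMod n)} (hK : K.card = n - s) :
    (SimpleGraph.fromRel (fun k1 k2 : {k // k ∈ K} =>
        (((fun j => j + (k1 : ZMod n)) '' J) ∩
          ((fun j => j + (k2 : ZMod n)) '' J)).Nonempty)).Connected := by
  have hn3 : 3 < n := lt_of_le_of_lt hs3 hsn
  have hKne : K.Nonempty := Finset.card_pos.1 (by omega)
  -- edge criterion
  have hedge : ∀ k1 k2 : ZMod n, (k2 - k1).val ≤ s - 1 →
      (((fun j => j + k1) '' J) ∩ ((fun j => j + k2) '' J)).Nonempty := by
    intro k1 k2 h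
    have hcast : (((k2 - k1).val : ℕ) : ZMod n) = k2 - k1 := by simp
    refine ⟨a + ((k2 - k1).val : ZMod n) + k1,
      ⟨a + ((k2 - k1).val : ZMod n), ?_, rfl⟩, ⟨a, ?_, ?_⟩⟩
    · exact (hJ _).2 ⟨(k2 - k1).val, by omega, rfl⟩
    · exact (hJ _).2 ⟨0, by omega, by simp⟩
    · show a + k2 = a + ((k2 - k1).val : ZMod n) + k1
      rw [hcast]; ring
  -- at most one "bad" element
  set Bad : ZMod n → Prop := fun k => ∀ j : ℕ, 1 ≤ j → j ≤ s - 1 → k - (j : ZMod n) ∉ K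
    with hBad
  have huniq : ∀ k ∈ K, ∀ k' ∈ K, Bad k → Bad k' → k = k' := by
    intro k hk k' hk' hb hb'
    by_contra hne
    set W : ZMod n → Finset (ZMod n) :=
      fun k0 => Finset.image (fun j : ℕ => k0 - (j : ZMod n)) (Finset.Icc 1 (s - 1)) with hW
    have hWcard : ∀ k0 : ZMod n, (W k0).card = s - 1 := by
      intro k0
      rw [hW]
      rw [Finset.card_image_of_injOn, Nat.card_Icc]
      · omega
      · intro i hi i' hi' h
        simp only [Finset.coe_Icc, Set.mem_Icc] at hi hi'
        have hcc : (i : ZMod n) = (i' : ZMod n) := by linear_combination -h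
        exact cast_inj_aux (by omega) (by omega) hcc
    have hWsub : ∀ k0, Bad k0 → W k0 ⊆ Kᶜ := by
      intro k0 hb0 x hx
      obtain ⟨j, hj, rfl⟩ := Finset.mem_image.1 hx
      simp only [Finset.mem_Icc] at hj
      exact Finset.mem_compl.2 (hb0 j hj.1 hj.2)
    have hdisj : Disjoint (W k) (W k') := by
      rw [Finset.disjoint_left]
      intro x hx hx'
      obtain ⟨j, hj, rfl⟩ := Finset.mem_image.1 hx
      obtain ⟨j', hj', he⟩ := Finset.mem_image.1 hx'
      simp only [Finset.mem_Icc] at hj hj'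
      rcases lt_trichotomy j j' with h | h | h
      · apply hb' (j' - j) (by omega) (by omega)
        have heq : k' - ((j' - j : ℕ) : ZMod n) = k := by
          rw [Nat.cast_sub (le_of_lt h)]
          linear_combination he
        rw [heq]; exact hk
      · apply hne
        subst h
        linear_combination -he
      · apply hb (j - j') (by omega) (by omega)
        have heq : k - ((j - j' : ℕ) : ZMod n) = k' := by
          rw [Nat.cast_sub (le_of_lt h)]
          linear_combination -he
        rw [heq]; exact hk'
    have hcard := Finset.card_union_of_disjoint hdisj
    have hle := Finset.card_le_card (Finset.union_subset (hWsub k hb) (hWsub k' hb'))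
    rw [hcard, hWcard, hWcard, Finset.card_compl, ZMod.card, hK] at hle
    omega
  obtain ⟨b, hbK, hbprop⟩ : ∃ b ∈ K, ∀ k ∈ K, k ≠ b → ¬ Bad k := by
    by_cases hex : ∃ k ∈ K, Bad k
    · obtain ⟨b, hbK, hbBad⟩ := hex
      exact ⟨b, hbK, fun k hk hne hbad => hne (huniq k hk b hbK hbad hbBad)⟩
    · push_neg at hex
      obtain ⟨b, hbK⟩ := hKne
      exact ⟨b, hbK, fun k hk _ => hex k hk⟩
  have hval : ∀ (x : ZMod n) (j : ℕ), j ≤ x.val → (x - (j : ZMod n)).val = x.val - j := by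
    intro x j hj
    have h1 : ((x.val - j : ℕ) : ZMod n) = x - (j : ZMod n) := by
      rw [Nat.cast_sub hj]; simp
    rw [← h1, ZMod.val_cast_of_lt (by have := ZMod.val_lt x; omega)]
  set G := SimpleGraph.fromRel (fun k1 k2 : {k // k ∈ K} =>
        (((fun j => j + (k1 : ZMod n)) '' J) ∩
          ((fun j => j + (k2 : ZMod n)) '' J)).Nonempty) with hG
  have reach : ∀ m : ℕ, ∀ k, (hk : k ∈ K) → (k - b).val = m →
      G.Reachable ⟨b, hbK⟩ ⟨k, hk⟩ := by
    intro m
    induction m using Nat.strong_induction_on with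
    | _ m IH =>
      intro k hk hm
      rcases Nat.eq_zero_or_pos m with h0 | hpos
      · have hkb : k = b := by
          have : k - b = 0 := by
            rw [← ZMod.val_eq_zero, hm, h0]
          have := sub_eq_zero.1 this
          exact this
        subst hkb
        rfl
      · have hkb : k ≠ b := by
          intro h
          rw [h, sub_self, ZMod.val_zero] at hm
          omega
        by_cases hcase : m ≤ s - 1
        · refine SimpleGraph.Adj.reachable ?_
          rw [hG, SimpleGraph.fromRel_adj]
          refine ⟨?_, Or.inl (hedge b k (by rw [hm]; omega))⟩
          simp only [ne_eq, Subtype.mk.injEq]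
          exact fun h => hkb h.symm
        · have hnotbad : ¬ ∀ j : ℕ, 1 ≤ j → j ≤ s - 1 → k - (j : ZMod n) ∉ K :=
            hbprop k hk hkb
          push_neg at hnotbad
          obtain ⟨j, hj1, hjs, hk'⟩ := hnotbad
          have hjm : j ≤ m := by omega
          have hval1 : ((k - (j : ZMod n)) - b).val = m - j := by
            have he : (k - (j : ZMod n)) - b = (k - b) - (j : ZMod n) := by ring
            rw [he, hval (k - b) j (by omega), hm]
          have hreach' := IH (m - j) (by omega) (k - (j : ZMod n)) hk' hval1
          refine hreach'.trans (SimpleGraph.Adj.reachable ?_)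
          rw [hG, SimpleGraph.fromRel_adj]
          constructor
          · simp only [ne_eq, Subtype.mk.injEq]
            intro h
            have hc : ((j : ℕ) : ZMod n) = ((0 : ℕ) : ZMod n) := by
              push_cast
              linear_combination -h
            have := cast_inj_aux (by omega) (by omega) hc
            omega
          · left
            apply hedge
            have he : k - (k - (j : ZMod n)) = (j : ZMod n) := by ring
            rw [he, ZMod.val_cast_of_lt (by omega)]
            omega
  rw [SimpleGraph.connected_iff]
  refine ⟨?_, ⟨⟨b, hbK⟩⟩⟩
  rintro ⟨u, hu⟩ ⟨v, hv⟩
  exact (reach _ u hu rfl).symm.trans (reach _ v hv rfl)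

/-- A contiguous index set of cardinality at least 3 is
friendly. -/
theorem stmt_16 {n : ℕ} [NeZero n] (J : Set (ZMod n))
    (h3 : 3 ≤ J.ncard)
    (hcontig : ∃ a : ZMod n,
      J = (fun i : ℕ => a + (i : ZMod n)) '' {i : ℕ | i < J.ncard}) :
    Friendly J := by
  obtain ⟨a, hJa⟩ := hcontig
  have hJ : ∀ x, x ∈ J ↔ ∃ i, i < J.ncard ∧ a + (i : ZMod n) = x := by
    intro x
    conv_lhs => rw [hJa]
    simp [Set.mem_image]
  by_cases hn : n ≤ J.ncard
  · left
    ext x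
    simp only [Set.mem_univ, iff_true]
    refine (hJ x).2 ⟨(x - a).val, lt_of_lt_of_le (ZMod.val_lt _) hn, ?_⟩
    simp
  · right
    push_neg at hn
    intro K hKcard
    exact ⟨cover_lemma (by omega) hn hJ hKcard,
      conn_lemma h3 hn hJ hKcard⟩
end

section
/- If J ⊆ ℤ/n satisfies |J| > n/2 and J is not periodic, then J is friendly. -/
/-- An index set with |J| > n/2 that is not periodic is
friendly. -/
theorem stmt_17 {n : ℕ} [NeZero n] (J : Set (ZMod n))
    (hcard : n < 2 * J.ncard)
    (hper : ¬ ∃ ℓ : ZMod n, ℓ ≠ 0 ∧ (fun j => j + ℓ) '' J = J) :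
    Friendly J := by
  classical
  by_cases huniv : J = Set.univ
  · exact Or.inl huniv
  right
  intro K hK
  have hnatcard : Nat.card (ZMod n) = n := Nat.card_zmod n
  have hJfin : J.Finite := Set.toFinite J
  have hcompl : J.ncard + Jᶜ.ncard = n := by
    rw [Set.ncard_add_ncard_compl, hnatcard]
  have hJle : J.ncard ≤ n := le_of_add_le_left hcompl.le
  have hJlt : J.ncard < n := by
    rcases lt_or_eq_of_le hJle with h | h
    · exact h
    · exfalso; apply huniv
      apply Set.eq_of_subset_of_ncard_le (Set.subset_univ J)
      rw [Set.ncard_univ, hnatcard, h]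
  have hKcard : K.card = Jᶜ.ncard := by omega
  have hinj : ∀ k : ZMod n, Function.Injective (fun j : ZMod n => j + k) :=
    fun k => add_left_injective k
  have himgcard : ∀ k : ZMod n, ((fun j => j + k) '' J).ncard = J.ncard :=
    fun k => Set.ncard_image_of_injective J (hinj k)
  constructor
  · -- coverage
    set U : Set (ZMod n) := ⋃ k ∈ K, (fun j => j + k) '' J with hU
    have hmemU : ∀ x : ZMod n, x ∉ U → ∀ k ∈ K, x - k ∈ Jᶜ := by
      intro x hx k hk hxk
      apply hx
      simp only [hU, Set.mem_iUnion, Set.mem_image, exists_prop]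
      exact ⟨k, hk, x - k, hxk, by ring⟩
    have hsub : ∀ x : ZMod n, x ∉ U →
        (K.image (fun k => x - k) : Finset (ZMod n)) = Jᶜ.toFinset := by
      intro x hx
      apply Finset.eq_of_subset_of_card_le
      · intro c hc
        simp only [Finset.mem_image] at hc
        obtain ⟨k, hk, rfl⟩ := hc
        simpa using hmemU x hx k hk
      · have hinj2 : Function.Injective (fun k : ZMod n => x - k) := by
          intro a b h
          have := congrArg (fun z => x - z) h
          simpa using this
        rw [Finset.card_image_of_injective _ hinj2, Set.toFinset_card,
          ← Nat.card_eq_fintype_card, Nat.card_coe_set_eq, hKcard]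
    -- Uᶜ has at most one element
    have hone : ∀ x y : ZMod n, x ∉ U → y ∉ U → x = y := by
      intro x y hx hy
      by_contra hxy
      apply hper
      refine ⟨y - x, by simpa [sub_eq_zero] using (Ne.symm hxy), ?_⟩
      have hCshift : (fun j => j + (y - x)) '' (Jᶜ) = Jᶜ := by
        refine Set.eq_of_subset_of_ncard_le ?_ ?_ (Set.toFinite _)
        · intro c hc
          obtain ⟨b, hb, rfl⟩ := hc
          have hb' : b ∈ (K.image (fun k => x - k) : Finset (ZMod n)) := by
            rw [hsub x hx]; simpa using hb
          simp only [Finset.mem_image] at hb'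
          obtain ⟨k, hk, rfl⟩ := hb'
          have : y - k ∈ (K.image (fun k => y - k) : Finset (ZMod n)) :=
            Finset.mem_image_of_mem _ hk
          rw [hsub y hy] at this
          have h2 : y - k ∈ Jᶜ := by simpa using this
          show x - k + (y - x) ∈ Jᶜ
          have : x - k + (y - x) = y - k := by ring
          rwa [this]
        · exact (Set.ncard_image_of_injective _ (hinj _)).ge
      -- transfer to J via complement
      have hiff : ∀ z : ZMod n, z - (y - x) ∈ Jᶜ ↔ z ∈ Jᶜ := by
        intro z
        constructor
        · intro h
          rw [← hCshift]
          exact ⟨z - (y - x), h, by ring⟩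
        · intro h
          rw [← hCshift] at h
          obtain ⟨b, hb, hbe⟩ := h
          have : b = z - (y - x) := eq_sub_of_add_eq hbe
          rwa [← this]
      ext z
      simp only [Set.mem_image]
      constructor
      · rintro ⟨j, hj, rfl⟩
        have : j + (y - x) - (y - x) ∈ J ↔ j + (y - x) ∈ J :=
          not_iff_not.mp (hiff (j + (y - x)))
        apply this.mp
        simpa using hj
      · intro hz
        refine ⟨z - (y - x), ?_, by ring⟩
        exact (not_iff_not.mp (hiff z)).mpr hz
    have hUc : (Uᶜ).ncard ≤ 1 := by
      rw [Set.ncard_le_one_iff_eq (Set.toFinite _)]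
      rcases Set.eq_empty_or_nonempty (Uᶜ) with h | ⟨a, ha⟩
      · exact Or.inl h
      · refine Or.inr ⟨a, ?_⟩
        ext z
        simp only [Set.mem_singleton_iff]
        constructor
        · intro hz; exact hone z a hz ha
        · rintro rfl; exact ha
    have := Set.ncard_add_ncard_compl U (Set.toFinite _) (Set.toFinite _)
    rw [hnatcard] at this
    omega
  · -- connectivity
    have hKne : K.Nonempty := by
      rw [← Finset.card_pos, hK]; omega
    haveI : Nonempty {k // k ∈ K} := ⟨⟨hKne.choose, hKne.choose_spec⟩⟩
    constructor
    intro a b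
    by_cases hab : a = b
    · exact hab ▸ SimpleGraph.Reachable.refl a
    · apply SimpleGraph.Adj.reachable
      rw [SimpleGraph.fromRel_adj]
      refine ⟨hab, Or.inl ?_⟩
      set A := (fun j => j + (a : ZMod n)) '' J
      set B := (fun j => j + (b : ZMod n)) '' J
      have h1 : (A ∩ B).ncard + (A ∪ B).ncard = A.ncard + B.ncard :=
        Set.ncard_inter_add_ncard_union _ _ (Set.toFinite _) (Set.toFinite _)
      have h2 : (A ∪ B).ncard ≤ n := by
        have := Set.ncard_le_ncard (Set.subset_univ (A ∪ B)) (Set.toFinite _)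
        rwa [Set.ncard_univ, hnatcard] at this
      have h3 : A.ncard = J.ncard := himgcard _
      have h4 : B.ncard = J.ncard := himgcard _
      exact Set.nonempty_of_ncard_ne_zero (by omega)
end

section
/- Let J ⊆ ℤ/n with |J| = s < n. Then the following are equivalent: (i) for every choice of n−s distinct shifts k_1,…,k_{n−s} ∈ ℤ/n, the shifted sets J_t = J + k_t (t = 1,…,n−s) satisfy |J_1 ∪ ⋯ ∪ J_{n−s}| ≥ n−1; (ii) J is not periodic. -/
/-- For J ⊆ ℤ/n with |J| = s < n, every choice of n−s distinct
shifts covers at least n−1 indices if and only if J is not periodic. -/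
theorem stmt_18 {n s : ℕ} [NeZero n] (J : Set (ZMod n))
    (hcard : J.ncard = s) (hs : s < n) :
    (∀ K : Finset (ZMod n), K.card = n - s →
        n - 1 ≤ Set.ncard (⋃ k ∈ K, (fun j => j + k) '' J))
    ↔ ¬ ∃ ℓ : ZMod n, ℓ ≠ 0 ∧ (fun j => j + ℓ) '' J = J := by
  classical
  have hn : Fintype.card (ZMod n) = n := ZMod.card n
  have hnatcard : Nat.card (ZMod n) = n := by
    rw [Nat.card_eq_fintype_card, hn]
  constructor
  · rintro h ⟨ℓ, hℓ, hper⟩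
    -- n ≥ 2
    have hn1 : n ≠ 1 := by
      rintro rfl
      exact hℓ (Subsingleton.elim ℓ 0)
    have hn2 : 2 ≤ n := by
      have := Nat.pos_of_ne_zero (NeZero.ne n)
      omega
    -- the bad K : complement of −J
    set Jf : Finset (ZMod n) := (Set.toFinite J).toFinset with hJf
    have hJfcard : Jf.card = s := by
      rw [← hcard]
      exact (Set.ncard_eq_toFinset_card J _).symm
    set K : Finset (ZMod n) := (Jf.image (fun j => -j))ᶜ with hK
    have hKcard : K.card = n - s := by
      rw [hK, Finset.card_compl, hn, Finset.card_image_of_injective _ neg_injective, hJfcard]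
    have hsub : (⋃ k ∈ K, (fun j => j + k) '' J) ⊆ ({0, ℓ} : Set (ZMod n))ᶜ := by
      intro x hx
      simp only [Set.mem_iUnion, Set.mem_image] at hx
      obtain ⟨k, hkK, j, hjJ, hjk⟩ := hx
      have hkK' : ∀ j' ∈ J, -j' ≠ k := by
        intro j' hj' hEq
        rw [hK, Finset.mem_compl] at hkK
        exact hkK (Finset.mem_image.2 ⟨j', (Set.toFinite J).mem_toFinset.2 hj', hEq⟩)
      intro hx01
      simp only [Set.mem_insert_iff, Set.mem_singleton_iff] at hx01
      rcases hx01 with h0 | hl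
      · -- x = 0
        rw [h0] at hjk
        exact hkK' j hjJ (by linear_combination -hjk)
      · -- x = ℓ
        rw [hl] at hjk
        have hj2 : j ∈ (fun j => j + ℓ) '' J := by rw [hper]; exact hjJ
        obtain ⟨j', hj'J, hj'⟩ := hj2
        dsimp at hj'
        exact hkK' j' hj'J (by linear_combination -hj' - hjk)
    have hle : Set.ncard (⋃ k ∈ K, (fun j => j + k) '' J) ≤ n - 2 := by
      have h1 : Set.ncard (⋃ k ∈ K, (fun j => j + k) '' J) ≤
          Set.ncard (({0, ℓ} : Set (ZMod n))ᶜ) :=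
        Set.ncard_le_ncard hsub (Set.toFinite _)
      have h2 : ({0, ℓ} : Set (ZMod n)).ncard + (({0, ℓ} : Set (ZMod n))ᶜ).ncard = n := by
        rw [Set.ncard_add_ncard_compl, hnatcard]
      rw [Set.ncard_pair (Ne.symm hℓ)] at h2
      omega
    have := h K hKcard
    omega
  · intro hnp K hKcard
    set S : Set (ZMod n) := ⋃ k ∈ K, (fun j => j + k) '' J with hS
    have hcompl : Sᶜ.ncard ≤ 1 := by
      rw [Set.ncard_le_one (Set.toFinite _)]
      intro x hx y hy
      by_contra hxy
      -- x − J = ↑Kᶜ = y − J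
      have key : ∀ z ∈ (Sᶜ : Set (ZMod n)), (fun j => z - j) '' J = ↑(Kᶜ) := by
        intro z hz
        refine Set.eq_of_subset_of_ncard_le ?_ ?_ (Set.toFinite _)
        · rintro a ⟨j, hjJ, hja⟩
          simp only [Finset.coe_compl, Set.mem_compl_iff, Finset.mem_coe]
          intro haK
          apply hz
          rw [hS]
          simp only [Set.mem_iUnion, Set.mem_image]
          exact ⟨a, haK, j, hjJ, by linear_combination -hja⟩
        · rw [Set.ncard_coe_finset, Finset.card_compl, hn, hKcard,
            Set.ncard_image_of_injective _ sub_right_injective, hcard]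
          omega
      have hx' := key x hx
      have hy' := key y hy
      apply hnp
      refine ⟨y - x, sub_ne_zero.2 (Ne.symm hxy), ?_⟩
      ext z
      constructor
      · rintro ⟨j, hjJ, hjz⟩
        dsimp at hjz
        have : y - z ∈ (fun j => y - j) '' J := by
          rw [hy', ← hx']
          exact ⟨j, hjJ, by dsimp; linear_combination -hjz⟩
        obtain ⟨j', hj'J, hj'⟩ := this
        dsimp at hj'
        have hj'z : j' = z := by linear_combination -hj'
        exact hj'z ▸ hj'J
      · intro hz
        have : y - z ∈ (fun j => x - j) '' J := by
          rw [hx', ← hy']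
          exact ⟨z, hz, rfl⟩
        obtain ⟨j, hjJ, hj⟩ := this
        dsimp at hj
        exact ⟨j, hjJ, by dsimp; linear_combination -hj⟩
    have h2 : S.ncard + Sᶜ.ncard = n := by
      rw [Set.ncard_add_ncard_compl, hnatcard]
    omega
end
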